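/- For two distinct points p_i ≠ p_j with positive weights w_i < w_j, the domain region Dom_w(p_i, p_j) is a bounded set, and Dom_w(p_j, p_i) is unbounded. -/
import Mathlib


theorem stmt12 (pi pj : EuclideanSpace ℝ (Fin 2)) (wi wj : ℝ)
    (hne : pi ≠ pj) (hwi : 0 < wi) (hij : wi < wj) :
    Bornology.IsBounded
      {x : EuclideanSpace ℝ (Fin 2) | ‖x - pi‖ / wi ≤ ‖x - pj‖ / wj} ∧
    ¬ Bornology.IsBounded
      {x : EuclideanSpace ℝ (Fin 2) | ‖x - pj‖ / wj ≤ ‖x - pi‖ / wi} := by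
  have hwj : (0:ℝ) < wj := hwi.trans hij
  have hd : (0:ℝ) < ‖pj - pi‖ := by
    rw [norm_pos_iff, sub_ne_zero]; exact hne.symm
  constructor
  · apply (Metric.isBounded_closedBall
      (x := pi) (r := wi * ‖pi - pj‖ / (wj - wi))).subset
    intro x hx
    simp only [Set.mem_setOf_eq] at hx
    have h1 : wj * ‖x - pi‖ ≤ wi * ‖x - pj‖ := by
      rw [div_le_div_iff₀ hwi hwj] at hx; linarith
    have h2 : ‖x - pj‖ ≤ ‖x - pi‖ + ‖pi - pj‖ := by
      rw [show x - pj = (x - pi) + (pi - pj) by abel]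
      exact norm_add_le _ _
    have h3 : (wj - wi) * ‖x - pi‖ ≤ wi * ‖pi - pj‖ := by nlinarith
    have h4 : ‖x - pi‖ ≤ wi * ‖pi - pj‖ / (wj - wi) := by
      rw [le_div_iff₀ (by linarith)]; linarith
    simpa [Metric.mem_closedBall, dist_eq_norm] using h4
  · intro hb
    obtain ⟨r, hr⟩ := Metric.isBounded_iff_subset_closedBall pj |>.mp hb
    have hpj : pj ∈ {x : EuclideanSpace ℝ (Fin 2) | ‖x - pj‖ / wj ≤ ‖x - pi‖ / wi} := by
      simp only [Set.mem_setOf_eq, sub_self, norm_zero, zero_div]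
      positivity
    have hr0 : 0 ≤ r := by simpa using hr hpj
    set t : ℝ := (r + 1) / ‖pj - pi‖ with ht
    have ht0 : 0 < t := by positivity
    set x : EuclideanSpace ℝ (Fin 2) := pj + t • (pj - pi) with hxdef
    have hxj : ‖x - pj‖ = t * ‖pj - pi‖ := by
      simp [hxdef, norm_smul, abs_of_pos ht0]
    have hxi : ‖x - pi‖ = (1 + t) * ‖pj - pi‖ := by
      have : x - pi = (1 + t) • (pj - pi) := by
        simp [hxdef, add_smul, one_smul]; abel
      rw [this, norm_smul, Real.norm_eq_abs, abs_of_pos (by linarith)]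
    have hxmem : x ∈ {x : EuclideanSpace ℝ (Fin 2) | ‖x - pj‖ / wj ≤ ‖x - pi‖ / wi} := by
      simp only [Set.mem_setOf_eq, hxj, hxi]
      rw [div_le_div_iff₀ hwj hwi]
      nlinarith [mul_pos ht0 hd, mul_le_mul_of_nonneg_left hij.le (mul_pos ht0 hd).le, mul_pos hwj hd]
    have := hr hxmem
    rw [Metric.mem_closedBall, dist_eq_norm, hxj, ht,
      div_mul_cancel₀ _ hd.ne'] at this
    linarith
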